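/- Let M be a finite-rank self-adjoint operator on a Hilbert space K and let F : H → K be an injective bounded operator with dense range whose adjoint F* is injective and whose range contains the range of M. Then F*MF is a finite-rank self-adjoint operator with rank(F*MF) = rank(M) and sign(F*MF) = sign(M), where sign(A) = rank(A₊) − rank(A₋). -/

import Mathlib

open ContinuousLinearMap Module Submodule

section Aux

variable {E H K : Type*} [NormedAddCommGroup E] [InnerProductSpace ℂ E] [CompleteSpace E]
  [NormedAddCommGroup H] [InnerProductSpace ℂ H] [CompleteSpace H]
  [NormedAddCommGroup K] [InnerProductSpace ℂ K] [CompleteSpace K]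

local notation "⟪" x ", " y "⟫" => @inner ℂ _ _ x y

private lemma aux_symm {A : E →L[ℂ] E} (hA : IsSelfAdjoint A) (x y : E) :
    ⟪A x, y⟫ = ⟪x, A y⟫ := by
  conv_lhs => rw [← hA.adjoint_eq]
  rw [adjoint_inner_left]

private lemma aux_pos_apply_eq_zero {T : E →L[ℂ] E} (hT : T.IsPositive) {x : E}
    (hx : RCLike.re ⟪T x, x⟫ = 0) : T x = 0 := by
  obtain ⟨p, hp, -, hp2⟩ :=
    CFC.exists_sqrt_of_isSelfAdjoint_of_quasispectrumRestricts hT.isSelfAdjoint hT.spectrumRestricts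
  have hpx : T x = p (p x) := by rw [← hp2]; rfl
  have h1 : ⟪T x, x⟫ = ⟪p x, p x⟫ := by rw [hpx, aux_symm hp]
  have hpx0 : p x = 0 := by
    have h2 : ‖p x‖ ^ 2 = 0 := by
      rw [← inner_self_eq_norm_sq (𝕜 := ℂ), ← h1]; exact hx
    exact norm_eq_zero.mp (sq_eq_zero_iff.mp h2)
  rw [hpx, hpx0, map_zero]

private lemma aux_orthogonal_range {A : E →L[ℂ] E} (hA : IsSelfAdjoint A) :
    (LinearMap.range (A : E →ₗ[ℂ] E))ᗮ = LinearMap.ker (A : E →ₗ[ℂ] E) := by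
  ext x
  simp only [Submodule.mem_orthogonal, LinearMap.mem_range, LinearMap.mem_ker]
  constructor
  · intro h
    have h2 : ⟪A x, A x⟫ = 0 := by
      have := h (A (A x)) ⟨A x, rfl⟩
      rwa [aux_symm hA (A x) x] at this
    exact inner_self_eq_zero.mp h2
  · rintro h u ⟨y, rfl⟩
    show ⟪A y, x⟫ = 0
    rw [aux_symm hA y x, show A x = 0 from h, inner_zero_right]

private lemma aux_range_le {N T : E →L[ℂ] E} (hT : IsSelfAdjoint T)
    (hsq : LinearMap.range (T ∘L T : E →ₗ[ℂ] E) ≤ LinearMap.range (N : E →ₗ[ℂ] E))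
    (hfin : FiniteDimensional ℂ (LinearMap.range (N : E →ₗ[ℂ] E))) :
    LinearMap.range (T : E →ₗ[ℂ] E) ≤ LinearMap.range (N : E →ₗ[ℂ] E) := by
  have hker : LinearMap.ker (T ∘L T : E →ₗ[ℂ] E) = LinearMap.ker (T : E →ₗ[ℂ] E) := by
    ext x
    simp only [LinearMap.mem_ker, coe_comp', Function.comp_apply]
    constructor
    · intro h
      have h2 : ⟪T x, T x⟫ = 0 := by
        rw [← aux_symm hT (T x) x, show T (T x) = 0 from h, inner_zero_left]
      exact inner_self_eq_zero.mp h2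
    · intro h; show T (T x) = 0; rw [show T x = 0 from h, map_zero]
  have hTT : IsSelfAdjoint (T ∘L T) := by
    rw [isSelfAdjoint_iff'] at hT ⊢
    rw [adjoint_comp, hT]
  haveI : FiniteDimensional ℂ (LinearMap.range (T ∘L T : E →ₗ[ℂ] E)) :=
    Submodule.finiteDimensional_of_le hsq
  have hclosed : IsClosed ((LinearMap.range (T ∘L T : E →ₗ[ℂ] E) : Submodule ℂ E) : Set E) :=
    Submodule.closed_of_finiteDimensional _
  calc LinearMap.range (T : E →ₗ[ℂ] E) ≤ (LinearMap.range (T : E →ₗ[ℂ] E)).topologicalClosure :=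
        Submodule.le_topologicalClosure _
    _ = (LinearMap.range (T : E →ₗ[ℂ] E))ᗮᗮ := (Submodule.orthogonal_orthogonal_eq_closure _).symm
    _ = (LinearMap.ker (T : E →ₗ[ℂ] E))ᗮ := by rw [aux_orthogonal_range hT]
    _ = (LinearMap.ker (T ∘L T : E →ₗ[ℂ] E))ᗮ := by rw [hker]
    _ = (LinearMap.range (T ∘L T : E →ₗ[ℂ] E))ᗮᗮ := by rw [aux_orthogonal_range hTT]
    _ = (LinearMap.range (T ∘L T : E →ₗ[ℂ] E)).topologicalClosure :=
        Submodule.orthogonal_orthogonal_eq_closure _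
    _ = LinearMap.range (T ∘L T : E →ₗ[ℂ] E) := SetLike.coe_injective (by
        rw [Submodule.topologicalClosure_coe, hclosed.closure_eq])
    _ ≤ LinearMap.range (N : E →ₗ[ℂ] E) := hsq

private lemma aux_decomp {N T S : E →L[ℂ] E} (hT : T.IsPositive) (hS : S.IsPositive)
    (hdec : N = T - S) (hTS : T * S = 0) (hST : S * T = 0)
    (hfin : FiniteDimensional ℂ (LinearMap.range (N : E →ₗ[ℂ] E))) :
    LinearMap.range (T : E →ₗ[ℂ] E) ≤ LinearMap.range (N : E →ₗ[ℂ] E) ∧ LinearMap.range (S : E →ₗ[ℂ] E) ≤ LinearMap.range (N : E →ₗ[ℂ] E) ∧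
    finrank ℂ (LinearMap.range (T : E →ₗ[ℂ] E)) + finrank ℂ (LinearMap.range (S : E →ₗ[ℂ] E))
      = finrank ℂ (LinearMap.range (N : E →ₗ[ℂ] E)) := by
  have hSTx : ∀ x, S (T x) = 0 := fun x => by
    have := congrArg (fun f => f x) hST; simpa [mul_apply] using this
  have hTle : LinearMap.range (T : E →ₗ[ℂ] E) ≤ LinearMap.range (N : E →ₗ[ℂ] E) := by
    refine aux_range_le hT.isSelfAdjoint ?_ hfin
    rintro _ ⟨x, rfl⟩
    exact ⟨T x, by simp [hdec, sub_apply, hSTx x]⟩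
  have hTSx : ∀ x, T (S x) = 0 := fun x => by
    have := congrArg (fun f => f x) hTS; simpa [mul_apply] using this
  have hSle : LinearMap.range (S : E →ₗ[ℂ] E) ≤ LinearMap.range (N : E →ₗ[ℂ] E) := by
    refine aux_range_le hS.isSelfAdjoint ?_ hfin
    rintro _ ⟨x, rfl⟩
    refine ⟨-(S x), ?_⟩
    simp [hdec, sub_apply, hTSx x]
  haveI : FiniteDimensional ℂ (LinearMap.range (T : E →ₗ[ℂ] E)) := Submodule.finiteDimensional_of_le hTle
  haveI : FiniteDimensional ℂ (LinearMap.range (S : E →ₗ[ℂ] E)) := Submodule.finiteDimensional_of_le hSle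
  have hinf : LinearMap.range (T : E →ₗ[ℂ] E) ⊓ LinearMap.range (S : E →ₗ[ℂ] E) = ⊥ := by
    rw [eq_bot_iff]
    intro x hx
    obtain ⟨a, ha⟩ := hx.1
    obtain ⟨b, hb⟩ := hx.2
    have h0 : ⟪x, x⟫ = ⟪T a, S b⟫ := by rw [show T a = x from ha, show S b = x from hb]
    have : ⟪x, x⟫ = 0 := by
      rw [h0, aux_symm hT.isSelfAdjoint a (S b), hTSx b, inner_zero_right]
    simpa using inner_self_eq_zero.mp this
  have hsup : LinearMap.range (T : E →ₗ[ℂ] E) ⊔ LinearMap.range (S : E →ₗ[ℂ] E) = LinearMap.range (N : E →ₗ[ℂ] E) := by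
    apply le_antisymm (sup_le hTle hSle)
    rintro _ ⟨x, rfl⟩
    rw [hdec]; show (T - S) x ∈ _; rw [sub_apply]
    exact Submodule.sub_mem _ (Submodule.mem_sup_left ⟨x, rfl⟩)
      (Submodule.mem_sup_right ⟨x, rfl⟩)
  refine ⟨hTle, hSle, ?_⟩
  have := Submodule.finrank_sup_add_finrank_inf_eq (LinearMap.range (T : E →ₗ[ℂ] E)) (LinearMap.range (S : E →ₗ[ℂ] E))
  rw [hinf, hsup] at this
  simpa using this.symm

private lemma aux_rank_le (F : H →L[ℂ] K) (hFinj : Function.Injective F)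
    (M Tp Tn : K →L[ℂ] K) (Np Nn : H →L[ℂ] H)
    (hTp : Tp.IsPositive) (hNn : Nn.IsPositive)
    (hdec : M = Tp - Tn) (hTnTp : Tn * Tp = 0)
    (hdec' : ContinuousLinearMap.adjoint F ∘L M ∘L F = Np - Nn)
    (hrange : LinearMap.range (Tp : K →ₗ[ℂ] K) ≤ LinearMap.range (F : H →ₗ[ℂ] K))
    [FiniteDimensional ℂ (LinearMap.range (Tp : K →ₗ[ℂ] K))] [FiniteDimensional ℂ (LinearMap.range (Np : H →ₗ[ℂ] H))] :
    finrank ℂ (LinearMap.range (Tp : K →ₗ[ℂ] K)) ≤ finrank ℂ (LinearMap.range (Np : H →ₗ[ℂ] H)) := by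
  have hFinj' : Function.Injective (F : H →ₗ[ℂ] K) := hFinj
  set eF := LinearEquiv.ofInjective (F : H →ₗ[ℂ] K) hFinj' with heF
  have hrange' : LinearMap.range (Tp : K →ₗ[ℂ] K) ≤ LinearMap.range (F : H →ₗ[ℂ] K) := hrange
  set G : (LinearMap.range (Tp : K →ₗ[ℂ] K) : Submodule ℂ K) →ₗ[ℂ] H :=
    eF.symm.toLinearMap ∘ₗ Submodule.inclusion hrange' with hG
  have hFG : ∀ m : LinearMap.range (Tp : K →ₗ[ℂ] K), F (G m) = (m : K) := fun m => by
    have := LinearEquiv.ofInjective_symm_apply (f := (F : H →ₗ[ℂ] K)) (h := hFinj')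
      (Submodule.inclusion hrange' m)
    exact this
  set ψ : (LinearMap.range (Tp : K →ₗ[ℂ] K) : Submodule ℂ K) →ₗ[ℂ] H := (Np : H →ₗ[ℂ] H) ∘ₗ G with hψ
  have hinj : Function.Injective ψ := by
    rw [← LinearMap.ker_eq_bot, eq_bot_iff]
    intro m hm
    have hNp0 : Np (G m) = 0 := hm
    obtain ⟨y, hy⟩ := m.2
    have hMn : Tn (m : K) = 0 := by
      rw [← hy]
      have := congrArg (fun f => f y) hTnTp
      simpa [mul_apply] using this
    have e1 : ⟪(ContinuousLinearMap.adjoint F ∘L M ∘L F) (G m), G m⟫ = ⟪Tp (m:K), (m:K)⟫ := by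
      rw [comp_apply, comp_apply, adjoint_inner_left, hFG m, hdec]
      simp [sub_apply, hMn]
    have e3 : ⟪(ContinuousLinearMap.adjoint F ∘L M ∘L F) (G m), G m⟫ = - ⟪Nn (G m), G m⟫ := by
      rw [hdec']
      simp [sub_apply, hNp0]
    have key : RCLike.re ⟪Tp (m:K), (m:K)⟫ = - RCLike.re ⟪Nn (G m), G m⟫ := by
      rw [← e1, e3, map_neg]
    have h1 : RCLike.re ⟪Tp (m:K), (m:K)⟫ = 0 := by
      have hnn := hNn.re_inner_nonneg_left (G m)
      have hpp := hTp.re_inner_nonneg_left (m : K)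
      linarith [key]
    have h2 : Tp (m:K) = 0 := aux_pos_apply_eq_zero hTp h1
    have h3 : ⟪(m:K), (m:K)⟫ = 0 := by
      have : ⟪(m:K), (m:K)⟫ = ⟪Tp y, (m:K)⟫ := by rw [show Tp y = (m:K) from hy]
      rw [this, aux_symm hTp.isSelfAdjoint, h2, inner_zero_right]
    have : (m : K) = 0 := inner_self_eq_zero.mp h3
    simpa [Submodule.mem_bot] using Subtype.ext this
  calc finrank ℂ (LinearMap.range (Tp : K →ₗ[ℂ] K)) = finrank ℂ (LinearMap.range ψ) :=
        (LinearMap.finrank_range_of_inj hinj).symm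
    _ ≤ finrank ℂ (LinearMap.range (Np : H →ₗ[ℂ] H)) := by
        apply Submodule.finrank_mono
        rintro _ ⟨m, rfl⟩
        exact ⟨G m, rfl⟩

end Aux

/-- Let `M` be a finite-rank self-adjoint operator on a Hilbert space `K` and let `F : H → K` be
an injective bounded operator with dense range, injective adjoint, and whose range contains the
range of `M`.  If `M = Mp - Mn` and `F* M F = Np - Nn` are the decompositions into positive and
negative parts, then `F* M F` is self-adjoint of finite rank, with the same rank as `M` and the
same signature `rank(·₊) − rank(·₋)` as `M`. -/
theorem adjoint_conj_preserves_rank_and_signature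
    {H K : Type*} [NormedAddCommGroup H] [InnerProductSpace ℂ H] [CompleteSpace H]
    [NormedAddCommGroup K] [InnerProductSpace ℂ K] [CompleteSpace K]
    (F : H →L[ℂ] K) (hFinj : Function.Injective F) (hFdense : DenseRange F)
    (hFadj : Function.Injective (ContinuousLinearMap.adjoint F))
    (M Mp Mn : K →L[ℂ] K) (hM : IsSelfAdjoint M)
    (hfr : FiniteDimensional ℂ ↥(LinearMap.range (M : K →ₗ[ℂ] K)))
    (hrange : LinearMap.range (M : K →ₗ[ℂ] K) ≤ LinearMap.range (F : H →ₗ[ℂ] K))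
    (hdecomp : M = Mp - Mn) (hMp : Mp.IsPositive) (hMn : Mn.IsPositive)
    (horth : Mp * Mn = 0) (horth' : Mn * Mp = 0)
    (Np Nn : H →L[ℂ] H)
    (hdecomp' : ContinuousLinearMap.adjoint F ∘L M ∘L F = Np - Nn)
    (hNp : Np.IsPositive) (hNn : Nn.IsPositive)
    (horthN : Np * Nn = 0) (horthN' : Nn * Np = 0) :
    IsSelfAdjoint (ContinuousLinearMap.adjoint F ∘L M ∘L F) ∧
      FiniteDimensional ℂ ↥(LinearMap.range ((ContinuousLinearMap.adjoint F ∘L M ∘L F : H →L[ℂ] H) : H →ₗ[ℂ] H)) ∧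
      Module.finrank ℂ ↥(LinearMap.range ((ContinuousLinearMap.adjoint F ∘L M ∘L F : H →L[ℂ] H) : H →ₗ[ℂ] H)) =
        Module.finrank ℂ ↥(LinearMap.range (M : K →ₗ[ℂ] K)) ∧
      (Module.finrank ℂ ↥(LinearMap.range (Np : H →ₗ[ℂ] H)) : ℤ) -
          (Module.finrank ℂ ↥(LinearMap.range (Nn : H →ₗ[ℂ] H)) : ℤ) =
        (Module.finrank ℂ ↥(LinearMap.range (Mp : K →ₗ[ℂ] K)) : ℤ) -
          (Module.finrank ℂ ↥(LinearMap.range (Mn : K →ₗ[ℂ] K)) : ℤ) := by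
  haveI := hfr
  set A := ContinuousLinearMap.adjoint F with hA
  have hsa : IsSelfAdjoint (A ∘L M ∘L F) := hM.adjoint_conj F
  have hle : LinearMap.range (M ∘L F : H →ₗ[ℂ] K) ≤ LinearMap.range (M : K →ₗ[ℂ] K) := by
    rintro _ ⟨x, rfl⟩; exact ⟨F x, rfl⟩
  haveI hfd1 : FiniteDimensional ℂ (LinearMap.range (M ∘L F : H →ₗ[ℂ] K)) :=
    Submodule.finiteDimensional_of_le hle
  have hclosed : IsClosed ((LinearMap.range (M ∘L F : H →ₗ[ℂ] K) : Submodule ℂ K) : Set K) :=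
    Submodule.closed_of_finiteDimensional _
  have hMF : LinearMap.range (M ∘L F : H →ₗ[ℂ] K) = LinearMap.range (M : K →ₗ[ℂ] K) := by
    refine le_antisymm hle ?_
    rintro _ ⟨x, rfl⟩
    have h1 : M x ∈ M '' (closure (Set.range F)) := ⟨x, hFdense x, rfl⟩
    have h2 : M x ∈ closure (M '' Set.range F) :=
      image_closure_subset_closure_image M.continuous h1
    have h3 : closure (M '' Set.range F)
        ⊆ closure ((LinearMap.range (M ∘L F : H →ₗ[ℂ] K) : Submodule ℂ K) : Set K) :=
      closure_mono (by rintro _ ⟨_, ⟨y, rfl⟩, rfl⟩; exact ⟨y, rfl⟩)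
    have h4 := h3 h2
    rwa [hclosed.closure_eq] at h4
  have hN : LinearMap.range (A ∘L M ∘L F : H →ₗ[ℂ] H)
      = Submodule.map (A : K →ₗ[ℂ] H) (LinearMap.range (M : K →ₗ[ℂ] K)) := by
    rw [← hMF]
    apply le_antisymm
    · rintro _ ⟨x, rfl⟩
      exact ⟨M (F x), ⟨x, rfl⟩, rfl⟩
    · rintro _ ⟨_, ⟨x, rfl⟩, rfl⟩
      exact ⟨x, rfl⟩
  have hAinj : Function.Injective (A : K →ₗ[ℂ] H) := hFadj
  set e := Submodule.equivMapOfInjective (A : K →ₗ[ℂ] H) hAinj (LinearMap.range (M : K →ₗ[ℂ] K)) with he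
  haveI hNfd : FiniteDimensional ℂ (LinearMap.range (A ∘L M ∘L F : H →ₗ[ℂ] H)) := by
    rw [hN]; exact Module.Finite.equiv e
  have hrankN : finrank ℂ (LinearMap.range (A ∘L M ∘L F : H →ₗ[ℂ] H)) = finrank ℂ (LinearMap.range (M : K →ₗ[ℂ] K)) := by
    rw [hN]; exact e.finrank_eq.symm
  obtain ⟨hMple, hMnle, hMsum⟩ := aux_decomp hMp hMn hdecomp horth horth' hfr
  obtain ⟨hNple, hNnle, hNsum⟩ := aux_decomp hNp hNn hdecomp' horthN horthN' hNfd
  haveI : FiniteDimensional ℂ (LinearMap.range (Mp : K →ₗ[ℂ] K)) := Submodule.finiteDimensional_of_le hMple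
  haveI : FiniteDimensional ℂ (LinearMap.range (Mn : K →ₗ[ℂ] K)) := Submodule.finiteDimensional_of_le hMnle
  haveI : FiniteDimensional ℂ (LinearMap.range (Np : H →ₗ[ℂ] H)) := Submodule.finiteDimensional_of_le hNple
  haveI : FiniteDimensional ℂ (LinearMap.range (Nn : H →ₗ[ℂ] H)) := Submodule.finiteDimensional_of_le hNnle
  have hp_le : finrank ℂ (LinearMap.range (Mp : K →ₗ[ℂ] K)) ≤ finrank ℂ (LinearMap.range (Np : H →ₗ[ℂ] H)) :=
    aux_rank_le F hFinj M Mp Mn Np Nn hMp hNn hdecomp horth' hdecomp'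
      (le_trans hMple hrange)
  have hn_le : finrank ℂ (LinearMap.range (Mn : K →ₗ[ℂ] K)) ≤ finrank ℂ (LinearMap.range (Nn : H →ₗ[ℂ] H)) := by
    have hdecn : -M = Mn - Mp := by rw [hdecomp, neg_sub]
    have hdecn' : A ∘L (-M) ∘L F = Nn - Np := by
      have hneg : A ∘L (-M) ∘L F = -(A ∘L M ∘L F) := by ext x; simp
      rw [hneg, hdecomp', neg_sub]
    exact aux_rank_le F hFinj (-M) Mn Mp Nn Np hMn hNp hdecn horth hdecn'
      (le_trans hMnle hrange)
  refine ⟨hsa, hNfd, hrankN, ?_⟩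
  have hsum : finrank ℂ (LinearMap.range (Np : H →ₗ[ℂ] H)) + finrank ℂ (LinearMap.range (Nn : H →ₗ[ℂ] H))
      = finrank ℂ (LinearMap.range (Mp : K →ₗ[ℂ] K)) + finrank ℂ (LinearMap.range (Mn : K →ₗ[ℂ] K)) :=
    hNsum.trans (hrankN.trans hMsum.symm)
  omega
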